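/- Exponential supremum inequality (Donsker–Varadhan plus Hoeffding–Azuma step): Let μ be any probability distribution on 𝒜 and let ε ∈ (0,1] satisfy π_n(a) ≥ ε almost surely for all a ∈ 𝒜 and all n ∈ {1,…,t}. Then for every λ > 0: E[ exp( sup_{π} { λ (r̂^IS(π, H^t) − r̄(π)) − KL(π‖μ) } − λ²/(8 t ε²) ) ] ≤ 1, where the supremum is over all probability distributions π on 𝒜. -/

import Mathlib

open MeasureTheory Real

namespace OfflineBandits

/-- The σ-algebra generated by the history `H^n = (A_1, R_1, …, A_n, R_n)`
(trivial for `n = 0`). -/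
def hist {Ω 𝒜 : Type*} [MeasurableSpace 𝒜] (A : ℕ → Ω → 𝒜) (R : ℕ → Ω → ℝ)
    (n : ℕ) : MeasurableSpace Ω :=
  MeasurableSpace.comap (fun ω => fun i : Fin n => (A (i.1 + 1) ω, R (i.1 + 1) ω)) inferInstance

/-- `p` is a probability mass function on the finite action set `𝒜`. -/
def IsPMF {𝒜 : Type*} [Fintype 𝒜] (p : 𝒜 → ℝ) : Prop :=
  (∀ a, 0 ≤ p a) ∧ ∑ a, p a = 1

/-- Relative entropy (KL divergence) between two pmfs on a finite set. -/
noncomputable def KL {𝒜 : Type*} [Fintype 𝒜] (p q : 𝒜 → ℝ) : ℝ :=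
  ∑ a, p a * Real.log (p a / q a)

/-- Importance-sampling estimate `r̂^IS(a, H^t)` of the expected reward of action `a`. -/
noncomputable def rIS {Ω 𝒜 : Type*} [DecidableEq 𝒜] (A : ℕ → Ω → 𝒜) (R : ℕ → Ω → ℝ)
    (pol : ℕ → Ω → 𝒜 → ℝ) (t : ℕ) (a : 𝒜) (ω : Ω) : ℝ :=
  (t : ℝ)⁻¹ * ∑ n ∈ Finset.Icc 1 t, (if A n ω = a then 1 else 0) / pol n ω (A n ω) * R n ω

/-- Importance-sampling estimate `r̂^IS(π, H^t)` of the expected reward of a policy. -/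
noncomputable def rISPol {Ω 𝒜 : Type*} [Fintype 𝒜] [DecidableEq 𝒜] (A : ℕ → Ω → 𝒜) (R : ℕ → Ω → ℝ)
    (pol : ℕ → Ω → 𝒜 → ℝ) (t : ℕ) (p : 𝒜 → ℝ) (ω : Ω) : ℝ :=
  ∑ a, p a * rIS A R pol t a ω

/-- Expected reward `r̄(π)` of a policy `π`. -/
def rPol {𝒜 : Type*} [Fintype 𝒜] (rbar : 𝒜 → ℝ) (p : 𝒜 → ℝ) : ℝ :=
  ∑ a, p a * rbar a

/-- The martingale difference `Z_n^IS(a)`. -/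
noncomputable def Zis {Ω 𝒜 : Type*} [DecidableEq 𝒜] (A : ℕ → Ω → 𝒜) (R : ℕ → Ω → ℝ)
    (pol : ℕ → Ω → 𝒜 → ℝ) (rbar : 𝒜 → ℝ) (a : 𝒜) (n : ℕ) (ω : Ω) : ℝ :=
  (if A n ω = a then 1 else 0) / pol n ω (A n ω) * R n ω - rbar a

/-- The cumulative conditional variance `V_t^IS(a)` of the IS martingale. -/
noncomputable def Vis {Ω 𝒜 : Type*} [MeasurableSpace Ω] [MeasurableSpace 𝒜] [DecidableEq 𝒜]
    (P : Measure Ω) (A : ℕ → Ω → 𝒜) (R : ℕ → Ω → ℝ)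
    (pol : ℕ → Ω → 𝒜 → ℝ) (rbar : 𝒜 → ℝ) (t : ℕ) (a : 𝒜) (ω : Ω) : ℝ :=
  ∑ n ∈ Finset.Icc 1 t, (P[fun ω' => (Zis A R pol rbar a n ω') ^ 2 | hist A R (n - 1)]) ω

/-- Core scalar inequality for Hoeffding's lemma:
`log ((1-p) + p * exp h) ≤ p*h + h^2/8` for `p ∈ [0,1]`. -/
lemma hoeffding_log_le {p : ℝ} (hp0 : 0 ≤ p) (hp1 : p ≤ 1) (h : ℝ) :
    Real.log ((1 - p) + p * Real.exp h) ≤ p * h + h ^ 2 / 8 := by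
  set q : ℝ := 1 - p with hq
  have hq0 : 0 ≤ q := by simp [hq]; linarith
  have hG : ∀ x : ℝ, 0 < q + p * Real.exp x := by
    intro x
    rcases eq_or_lt_of_le hp0 with hp | hp
    · simp [← hp, hq]
    · have := Real.exp_pos x
      nlinarith
  -- F x = p*x + x^2/8 - log (q + p * exp x), F' = Ψ
  set F : ℝ → ℝ := fun x => p * x + x ^ 2 / 8 - Real.log (q + p * Real.exp x) with hF
  set Ψ : ℝ → ℝ := fun x => p + x / 4 - p * Real.exp x / (q + p * Real.exp x) with hΨ
  have hFderiv : ∀ x : ℝ, HasDerivAt F (Ψ x) x := by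
    intro x
    have h1 : HasDerivAt (fun x : ℝ => q + p * Real.exp x) (p * Real.exp x) x := by
      simpa using ((Real.hasDerivAt_exp x).const_mul p).const_add q
    have h2 : HasDerivAt (fun x : ℝ => Real.log (q + p * Real.exp x))
        (p * Real.exp x / (q + p * Real.exp x)) x := h1.log (hG x).ne'
    have h3 : HasDerivAt (fun x : ℝ => p * x + x ^ 2 / 8) (p + 2 * x / 8) x := by
      have h := ((hasDerivAt_id x).const_mul p).add ((hasDerivAt_pow 2 x).div_const 8)
      simp at h
      exact h
    have := h3.sub h2
    exact this.congr_deriv (by simp only [hΨ]; ring)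
  have hΨ0 : Ψ 0 = 0 := by
    simp [hΨ, hq]
  have hΨderiv : ∀ x : ℝ, HasDerivAt Ψ
      (1 / 4 - p * Real.exp x * q / (q + p * Real.exp x) ^ 2) x := by
    intro x
    have h1 : HasDerivAt (fun x : ℝ => q + p * Real.exp x) (p * Real.exp x) x := by
      simpa using ((Real.hasDerivAt_exp x).const_mul p).const_add q
    have h2 : HasDerivAt (fun x : ℝ => p * Real.exp x) (p * Real.exp x) x :=
      (Real.hasDerivAt_exp x).const_mul p
    have h3 := h2.div h1 (hG x).ne'
    have h4 : HasDerivAt (fun x : ℝ => p + x / 4) (1 / 4) x := by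
      simpa using ((hasDerivAt_id x).div_const 4).const_add p
    have := h4.sub h3
    exact this.congr_deriv (by
      rw [sub_right_inj, div_left_inj' (pow_ne_zero 2 (hG x).ne')]
      ring)
  have hΨmono : Monotone Ψ := by
    have hdiff : ∀ x, DifferentiableAt ℝ Ψ x := fun x => (hΨderiv x).differentiableAt
    apply monotone_of_deriv_nonneg (fun x => hdiff x)
    intro x
    rw [(hΨderiv x).deriv]
    have hGx := hG x
    have hpe : 0 ≤ p * Real.exp x := mul_nonneg hp0 (Real.exp_pos x).le
    rw [sub_nonneg, div_le_iff₀ (by positivity)]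
    nlinarith [sq_nonneg (q - p * Real.exp x)]
  have hF0 : F 0 = 0 := by simp [hF, hq]
  have hFx : 0 ≤ F h := by
    rcases le_total 0 h with hh | hh
    · have : MonotoneOn F (Set.Ici 0) := by
        apply monotoneOn_of_deriv_nonneg (convex_Ici 0)
          (HasDerivAt.continuousOn (fun x _ => hFderiv x))
        · intro x hx
          exact (hFderiv x).differentiableAt.differentiableWithinAt
        · intro x hx
          rw [(hFderiv x).deriv]
          have := hΨmono (le_of_lt (by simpa using hx : (0:ℝ) < x))
          rw [hΨ0] at this
          exact this
      have := this (Set.self_mem_Ici) (Set.mem_Ici.2 hh) hh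
      rwa [hF0] at this
    · have : AntitoneOn F (Set.Iic 0) := by
        apply antitoneOn_of_deriv_nonpos (convex_Iic 0)
          (HasDerivAt.continuousOn (fun x _ => hFderiv x))
        · intro x hx
          exact (hFderiv x).differentiableAt.differentiableWithinAt
        · intro x hx
          rw [(hFderiv x).deriv]
          have := hΨmono (le_of_lt (by simpa using hx : x < (0:ℝ)))
          rw [hΨ0] at this
          exact this
      have := this (Set.mem_Iic.2 hh) (Set.self_mem_Iic) hh
      rwa [hF0] at this
  have : Real.log (q + p * Real.exp h) ≤ p * h + h ^ 2 / 8 := by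
    have := hFx; simp only [hF] at this; linarith
  simpa [hq] using this


/-- Hoeffding combination bound: for `a ≤ 0 ≤ b`, `a < b`,
`(b * exp (s*a) - a * exp (s*b)) / (b - a) ≤ exp (s^2 * (b-a)^2 / 8)`. -/
lemma hoeffding_combo {a b : ℝ} (s : ℝ) (ha : a ≤ 0) (hb : 0 ≤ b) (hab : a < b) :
    (b * Real.exp (s * a) - a * Real.exp (s * b)) / (b - a)
      ≤ Real.exp (s ^ 2 * (b - a) ^ 2 / 8) := by
  have hba : (0:ℝ) < b - a := by linarith
  set p : ℝ := -a / (b - a) with hp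
  have hp0 : 0 ≤ p := div_nonneg (by linarith) hba.le
  have hp1 : p ≤ 1 := by rw [hp, div_le_one hba]; linarith
  set h : ℝ := s * (b - a) with hh
  have key := hoeffding_log_le hp0 hp1 h
  have hpos : 0 < (1 - p) + p * Real.exp h := by
    rcases eq_or_lt_of_le hp0 with hp' | hp'
    · simp [← hp']
    · nlinarith [Real.exp_pos h]
  have hle : (1 - p) + p * Real.exp h ≤ Real.exp (p * h + h ^ 2 / 8) := by
    rw [← Real.exp_log hpos]; exact Real.exp_le_exp.2 key
  have hpb : p * (b - a) = -a := by rw [hp]; exact div_mul_cancel₀ _ hba.ne'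
  have e1 : -(p * h) = s * a := by rw [hh]; linear_combination (-s) * hpb
  have e2 : (1 - p) * h = s * b := by rw [hh]; linear_combination (-s) * hpb
  have e3 : h ^ 2 = s ^ 2 * (b - a) ^ 2 := by rw [hh]; ring
  have lhs_eq : (b * Real.exp (s * a) - a * Real.exp (s * b)) / (b - a)
      = Real.exp (-(p * h)) * ((1 - p) + p * Real.exp h) := by
    rw [e1]
    have h1p : 1 - p = b / (b - a) := by rw [eq_div_iff hba.ne']; linear_combination -hpb
    have hsb : s * b = s * a + h := by rw [hh]; ring
    rw [h1p, hsb, Real.exp_add, hp]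
    field_simp
    ring
  rw [lhs_eq]
  calc Real.exp (-(p * h)) * ((1 - p) + p * Real.exp h)
      ≤ Real.exp (-(p * h)) * Real.exp (p * h + h ^ 2 / 8) :=
        mul_le_mul_of_nonneg_left hle (Real.exp_pos _).le
    _ = Real.exp (h ^ 2 / 8) := by rw [← Real.exp_add]; ring_nf
    _ = Real.exp (s ^ 2 * (b - a) ^ 2 / 8) := by rw [e3]

/-- Integrability of a.e.-bounded a.e.-strongly-measurable functions wrt a finite measure. -/
lemma integrable_of_bdd {Ω : Type*} [MeasurableSpace Ω] {P : Measure Ω} [IsFiniteMeasure P]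
    {f : Ω → ℝ} (hf : AEStronglyMeasurable f P) {C : ℝ} (hC : ∀ᵐ ω ∂P, |f ω| ≤ C) :
    Integrable f P :=
  Integrable.mono' (integrable_const C) hf (by simpa [Real.norm_eq_abs] using hC)

/-- Conditional Hoeffding lemma. -/
lemma condexp_exp_le {Ω : Type*} {m m0 : MeasurableSpace Ω} (hm : m ≤ m0)
    {P : Measure Ω} [IsProbabilityMeasure P] {Z : Ω → ℝ} (hZ : Measurable Z)
    {a b s : ℝ} (ha : a ≤ 0) (hb : 0 ≤ b) (hab : a < b)
    (hbound : ∀ᵐ ω ∂P, Z ω ∈ Set.Icc a b) (hmean : P[Z|m] =ᵐ[P] 0) :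
    P[fun ω => Real.exp (s * Z ω)|m] ≤ᵐ[P] fun _ => Real.exp (s ^ 2 * (b - a) ^ 2 / 8) := by
  have hba : (0:ℝ) < b - a := by linarith
  set c1 : ℝ := (b * Real.exp (s * a) - a * Real.exp (s * b)) / (b - a) with hc1
  set c2 : ℝ := (Real.exp (s * b) - Real.exp (s * a)) / (b - a) with hc2
  -- pointwise convexity bound (a.e.)
  have hptw : ∀ᵐ ω ∂P, Real.exp (s * Z ω) ≤ c1 + c2 * Z ω := by
    filter_upwards [hbound] with ω hω
    obtain ⟨hza, hzb⟩ := hω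
    set lam : ℝ := (b - Z ω) / (b - a) with hlam
    set mu : ℝ := (Z ω - a) / (b - a) with hmu
    have hlam0 : 0 ≤ lam := div_nonneg (by linarith) hba.le
    have hmu0 : 0 ≤ mu := div_nonneg (by linarith) hba.le
    have hlm : lam + mu = 1 := by
      rw [hlam, hmu, ← add_div, div_eq_one_iff_eq hba.ne']; ring
    have hlm2 : lam * (b - a) = b - Z ω := by rw [hlam]; exact div_mul_cancel₀ _ hba.ne'
    have hz : lam * (s * a) + mu * (s * b) = s * Z ω := by
      linear_combination s * b * hlm - s * hlm2
    have := convexOn_exp.2 (Set.mem_univ (s * a)) (Set.mem_univ (s * b)) hlam0 hmu0 hlm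
    rw [smul_eq_mul, smul_eq_mul, smul_eq_mul, smul_eq_mul, hz] at this
    calc Real.exp (s * Z ω) ≤ lam * Real.exp (s * a) + mu * Real.exp (s * b) := this
      _ = c1 + c2 * Z ω := by field_simp [hlam, hmu, hc1, hc2]; ring
  -- integrabilities
  have hZbd : ∀ᵐ ω ∂P, |Z ω| ≤ max (-a) b := by
    filter_upwards [hbound] with ω hω
    rw [abs_le]; constructor
    · linarith [hω.1, le_max_left (-a) b]
    · exact le_trans hω.2 (le_max_right _ _)
  have hZint : Integrable Z P := integrable_of_bdd hZ.aestronglyMeasurable hZbd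
  have hexpint : Integrable (fun ω => Real.exp (s * Z ω)) P := by
    apply integrable_of_bdd (Real.measurable_exp.comp (hZ.const_mul s)).aestronglyMeasurable
    filter_upwards [hbound] with ω hω
    simp only [Function.comp_apply]
    rw [abs_of_pos (Real.exp_pos _)]
    apply Real.exp_le_exp.2
    rcases le_total 0 s with hs | hs
    · calc s * Z ω ≤ s * b := by nlinarith [hω.2]
        _ ≤ |s| * max (|a|) (|b|) := by
          rw [abs_of_nonneg hs]
          exact mul_le_mul_of_nonneg_left ((le_abs_self b).trans (le_max_right _ _)) hs
    · calc s * Z ω ≤ s * a := by nlinarith [hω.1]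
        _ ≤ |s| * max (|a|) (|b|) := by
          calc s * a ≤ |s * a| := le_abs_self _
            _ = |s| * |a| := abs_mul _ _
            _ ≤ |s| * max (|a|) (|b|) := by
              exact mul_le_mul_of_nonneg_left (le_max_left _ _) (abs_nonneg s)
  have haff : Integrable (fun ω => c1 + c2 * Z ω) P := by
    exact (integrable_const c1).add (hZint.const_mul c2)
  -- condexp monotone + compute condexp of affine function
  have h1 : P[fun ω => Real.exp (s * Z ω)|m] ≤ᵐ[P] P[fun ω => c1 + c2 * Z ω|m] :=
    condExp_mono hexpint haff hptw
  have h2 : P[fun ω => c1 + c2 * Z ω|m] =ᵐ[P] fun ω => c1 + c2 * (P[Z|m]) ω := by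
    have ha1 : P[fun ω => c1 + c2 * Z ω|m]
        =ᵐ[P] P[fun _ => c1|m] + P[fun ω => c2 * Z ω|m] :=
      condExp_add (integrable_const c1) (hZint.const_mul c2) m
    have ha2 : P[fun ω => c2 * Z ω|m] =ᵐ[P] fun ω => c2 * (P[Z|m]) ω := by
      exact condExp_smul (μ := P) (m := m) c2 Z
    filter_upwards [ha1, ha2] with ω hω1 hω2
    rw [hω1, Pi.add_apply, condExp_const hm, hω2]
  have h3 : (fun ω => c1 + c2 * (P[Z|m]) ω) =ᵐ[P] fun _ => c1 := by
    filter_upwards [hmean] with ω hω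
    simp [hω]
  filter_upwards [h1, h2, h3] with ω hω1 hω2 hω3
  calc (P[fun ω => Real.exp (s * Z ω)|m]) ω ≤ (P[fun ω => c1 + c2 * Z ω|m]) ω := hω1
    _ = c1 := by rw [hω2, hω3]
    _ ≤ Real.exp (s ^ 2 * (b - a) ^ 2 / 8) := hoeffding_combo s ha hb hab


/-- Azuma-type MGF bound by induction over the horizon. -/
lemma azuma_mgf {Ω : Type*} {m0 : MeasurableSpace Ω} (P : Measure Ω) [IsProbabilityMeasure P]
    (F : ℕ → MeasurableSpace Ω) (hFle : ∀ n, F n ≤ m0) (hFmono : Monotone F)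
    (Z : ℕ → Ω → ℝ) (hZmeas : ∀ n, Measurable (Z n)) (t : ℕ)
    (hadap : ∀ n, 1 ≤ n → n ≤ t → StronglyMeasurable[F n] (Z n))
    (C : ℝ) (hC : 0 ≤ C)
    (hbd : ∀ n, 1 ≤ n → n ≤ t → ∀ᵐ ω ∂P, |Z n ω| ≤ C)
    (s K : ℝ) (hK : 0 ≤ K)
    (hcond : ∀ n, 1 ≤ n → n ≤ t →
      P[fun ω => Real.exp (s * Z n ω)|F (n - 1)] ≤ᵐ[P] fun _ => K) :
    ∫ ω, Real.exp (s * ∑ n ∈ Finset.Icc 1 t, Z n ω) ∂P ≤ K ^ t := by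
  -- a.e. bound on partial sums, and basic facts, then induction
  suffices H : ∀ N, N ≤ t → ∫ ω, Real.exp (s * ∑ n ∈ Finset.Icc 1 N, Z n ω) ∂P ≤ K ^ N from
    H t le_rfl
  intro N
  induction N with
  | zero =>
    intro _
    simp [Finset.Icc_eq_empty (by omega : ¬ (1:ℕ) ≤ 0)]
  | succ N ih =>
    intro hNt
    have hNt' : N ≤ t := by omega
    have hIH := ih hNt'
    set SN : Ω → ℝ := fun ω => ∑ n ∈ Finset.Icc 1 N, Z n ω with hSN
    set f : Ω → ℝ := fun ω => Real.exp (s * SN ω) with hf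
    set g : Ω → ℝ := fun ω => Real.exp (s * Z (N + 1) ω) with hg
    -- a.e. bound on Z's over Icc 1 N
    have hbdall : ∀ᵐ ω ∂P, ∀ n ∈ (Finset.Icc 1 (N+1) : Finset ℕ), |Z n ω| ≤ C := by
      rw [Filter.eventually_all_finset]
      intro n hn
      simp only [Finset.mem_Icc] at hn
      exact hbd n hn.1 (by omega)
    have hSNbd : ∀ᵐ ω ∂P, |SN ω| ≤ N * C := by
      filter_upwards [hbdall] with ω hω
      calc |SN ω| ≤ ∑ n ∈ Finset.Icc 1 N, |Z n ω| := Finset.abs_sum_le_sum_abs _ _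
        _ ≤ ∑ n ∈ Finset.Icc 1 N, C := by
            apply Finset.sum_le_sum
            intro n hn
            simp only [Finset.mem_Icc] at hn
            exact hω n (by simp only [Finset.mem_Icc]; omega)
        _ = N * C := by simp [Nat.card_Icc]
    -- measurability
    have hSNmeas : Measurable SN := by
      apply Finset.measurable_sum
      intro n _; exact hZmeas n
    have hfmeas : Measurable f := Real.measurable_exp.comp (hSNmeas.const_mul s)
    have hgmeas : Measurable g := Real.measurable_exp.comp ((hZmeas (N+1)).const_mul s)
    have hfm : StronglyMeasurable[F N] f := by
      have : StronglyMeasurable[F N] SN := by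
        apply Finset.stronglyMeasurable_fun_sum
        intro n hn
        simp only [Finset.mem_Icc] at hn
        exact ((hadap n hn.1 (by omega)).mono (hFmono hn.2))
      exact (Real.continuous_exp.comp_stronglyMeasurable (this.const_mul s))
    -- integrability
    have hfb : ∀ᵐ ω ∂P, |f ω| ≤ Real.exp (|s| * (N * C)) := by
      filter_upwards [hSNbd] with ω hω
      rw [hf]
      simp only [abs_of_pos (Real.exp_pos _)]
      apply Real.exp_le_exp.2
      calc s * SN ω ≤ |s * SN ω| := le_abs_self _
        _ = |s| * |SN ω| := abs_mul _ _
        _ ≤ |s| * (N * C) := mul_le_mul_of_nonneg_left hω (abs_nonneg s)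
    have hgb : ∀ᵐ ω ∂P, |g ω| ≤ Real.exp (|s| * C) := by
      filter_upwards [hbdall] with ω hω
      rw [hg]
      simp only [abs_of_pos (Real.exp_pos _)]
      apply Real.exp_le_exp.2
      have := hω (N+1) (by simp only [Finset.mem_Icc]; omega)
      calc s * Z (N+1) ω ≤ |s * Z (N+1) ω| := le_abs_self _
        _ = |s| * |Z (N+1) ω| := abs_mul _ _
        _ ≤ |s| * C := mul_le_mul_of_nonneg_left this (abs_nonneg s)
    have hfint : Integrable f P := integrable_of_bdd hfmeas.aestronglyMeasurable hfb
    have hgint : Integrable g P := integrable_of_bdd hgmeas.aestronglyMeasurable hgb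
    have hfgint : Integrable (f * g) P := by
      apply integrable_of_bdd ((hfmeas.mul hgmeas).aestronglyMeasurable)
      filter_upwards [hfb, hgb] with ω h1 h2
      calc |(f * g) ω| = |f ω| * |g ω| := abs_mul _ _
        _ ≤ Real.exp (|s| * (N * C)) * Real.exp (|s| * C) := by
            apply mul_le_mul h1 h2 (abs_nonneg _) (Real.exp_pos _).le
    -- key computation
    have hsumsplit : (fun ω => Real.exp (s * ∑ n ∈ Finset.Icc 1 (N+1), Z n ω)) = f * g := by
      funext ω
      rw [Finset.sum_Icc_succ_top (by omega : 1 ≤ N + 1)]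
      simp only [Pi.mul_apply, hf, hg, hSN]
      rw [mul_add, Real.exp_add]
    have hpull : P[f * g|F N] =ᵐ[P] f * P[g|F N] :=
      condExp_mul_of_stronglyMeasurable_left hfm hfgint hgint
    have hgcond := hcond (N+1) (by omega) hNt
    have hgpos : 0 ≤ᵐ[P] P[g|F N] := by
      have : (0:Ω → ℝ) ≤ᵐ[P] g := Filter.Eventually.of_forall fun ω => (Real.exp_pos _).le
      simpa using condExp_nonneg this
    calc ∫ ω, Real.exp (s * ∑ n ∈ Finset.Icc 1 (N+1), Z n ω) ∂P
        = ∫ ω, (f * g) ω ∂P := by rw [hsumsplit]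
      _ = ∫ ω, (P[f * g|F N]) ω ∂P := (integral_condExp (hFle N)).symm
      _ = ∫ ω, f ω * (P[g|F N]) ω ∂P := integral_congr_ae (by
            filter_upwards [hpull] with ω hω; rw [hω]; rfl)
      _ ≤ ∫ ω, f ω * K ∂P := by
            apply integral_mono_of_nonneg
            · filter_upwards [hgpos] with ω hω
              exact mul_nonneg (Real.exp_pos _).le hω
            · exact hfint.mul_const K
            · filter_upwards [hgcond] with ω hω
              exact mul_le_mul_of_nonneg_left hω (Real.exp_pos _).le
      _ = (∫ ω, f ω ∂P) * K := integral_mul_const K f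
      _ ≤ K ^ N * K := mul_le_mul_of_nonneg_right hIH hK
      _ = K ^ (N + 1) := by ring


section HistLemmas

lemma measurable_comap_comp {α β γ : Type*} [MeasurableSpace β] [MeasurableSpace γ]
    (f : α → β) {g : β → γ} (hg : Measurable g) :
    Measurable[MeasurableSpace.comap f inferInstance] (g ∘ f) :=
  fun s hs => ⟨g ⁻¹' s, hg hs, rfl⟩

variable {Ω 𝒜 : Type*} [MeasurableSpace Ω] [MeasurableSpace 𝒜]
  {A : ℕ → Ω → 𝒜} {R : ℕ → Ω → ℝ}

lemma hist_le (hA : ∀ n, Measurable (A n)) (hR : ∀ n, Measurable (R n)) (n : ℕ) :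
    hist A R n ≤ ‹MeasurableSpace Ω› := by
  rw [hist]
  exact Measurable.comap_le (measurable_pi_lambda _ (fun i => (hA _).prodMk (hR _)))

lemma hist_mono : Monotone (hist A R) := by
  intro m n hmn
  rw [hist, hist]
  have : (fun ω => fun i : Fin m => (A (i.1 + 1) ω, R (i.1 + 1) ω))
      = (fun v : Fin n → 𝒜 × ℝ => fun i : Fin m => v ⟨i.1, lt_of_lt_of_le i.2 hmn⟩)
        ∘ (fun ω => fun i : Fin n => (A (i.1 + 1) ω, R (i.1 + 1) ω)) := rfl
  rw [this, ← MeasurableSpace.comap_comp]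
  exact MeasurableSpace.comap_mono
    (Measurable.comap_le (measurable_pi_lambda _ (fun i => measurable_pi_apply _)))

lemma measurable_A_hist {k n : ℕ} (hk : 1 ≤ k) (hkn : k ≤ n) :
    Measurable[hist A R n] (A k) := by
  have hlt : k - 1 < n := by omega
  have : A k = (fun v : Fin n → 𝒜 × ℝ => (v ⟨k - 1, hlt⟩).1)
      ∘ (fun ω => fun i : Fin n => (A (i.1 + 1) ω, R (i.1 + 1) ω)) := by
    funext ω
    simp [Nat.sub_add_cancel hk]
  rw [hist, this]
  exact measurable_comap_comp _ ((measurable_pi_apply _).fst)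

lemma measurable_R_hist {k n : ℕ} (hk : 1 ≤ k) (hkn : k ≤ n) :
    Measurable[hist A R n] (R k) := by
  have hlt : k - 1 < n := by omega
  have : R k = (fun v : Fin n → 𝒜 × ℝ => (v ⟨k - 1, hlt⟩).2)
      ∘ (fun ω => fun i : Fin n => (A (i.1 + 1) ω, R (i.1 + 1) ω)) := by
    funext ω
    simp [Nat.sub_add_cancel hk]
  rw [hist, this]
  exact measurable_comap_comp _ ((measurable_pi_apply _).snd)


end HistLemmas

/-- The conditional mean of the importance-sampling increment equals `rbar a`. -/
lemma condexp_incr_eq_rbar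
    {Ω 𝒜 : Type*} {m : MeasurableSpace Ω} [mΩ : MeasurableSpace Ω] [DecidableEq 𝒜]
    [MeasurableSpace 𝒜] [MeasurableSingletonClass 𝒜]
    (P : Measure Ω) [IsProbabilityMeasure P]
    (hm : m ≤ mΩ)
    (An : Ω → 𝒜) (Rn : Ω → ℝ) (hAn : Measurable An) (hRn : Measurable Rn)
    (hR01 : ∀ ω, Rn ω ∈ Set.Icc (0 : ℝ) 1)
    (q : Ω → ℝ) (hq : Measurable[m] q) (a : 𝒜)
    (hcond : (P[(fun ω => if An ω = a then (1 : ℝ) else 0) | m]) =ᵐ[P] q)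
    (rbar : 𝒜 → ℝ)
    (hrew : (P[Rn | m ⊔ MeasurableSpace.comap An inferInstance]) =ᵐ[P] fun ω => rbar (An ω))
    (ε : ℝ) (hε0 : 0 < ε) (hεq : ∀ᵐ ω ∂P, ε ≤ q ω) :
    P[fun ω => (if An ω = a then (1:ℝ) else 0) / q ω * Rn ω | m] =ᵐ[P] fun _ => rbar a := by
  have h𝒢 : m ⊔ MeasurableSpace.comap An inferInstance ≤ mΩ :=
    sup_le hm (Measurable.comap_le hAn)
  have hm𝒢 : m ≤ m ⊔ MeasurableSpace.comap An inferInstance := le_sup_left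
  have hIeq : (fun ω => if An ω = a then (1:ℝ) else 0)
      = Set.indicator (An ⁻¹' {a}) (fun _ => (1:ℝ)) := by
    funext ω
    by_cases h : An ω = a <;> simp [h]
  have hsetAa : MeasurableSet[m ⊔ MeasurableSpace.comap An inferInstance] (An ⁻¹' {a}) :=
    (le_sup_right : MeasurableSpace.comap An inferInstance ≤ _) _
      ⟨{a}, measurableSet_singleton a, rfl⟩
  have hI𝒢 : StronglyMeasurable[m ⊔ MeasurableSpace.comap An inferInstance]
      (fun ω => if An ω = a then (1:ℝ) else 0) := by
    rw [hIeq]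
    exact (Measurable.indicator measurable_const hsetAa).stronglyMeasurable
  have hImeas : Measurable (fun ω => if An ω = a then (1:ℝ) else 0) := by
    rw [hIeq]
    exact measurable_const.indicator (hAn (measurableSet_singleton a))
  have hIbd : ∀ ω, |if An ω = a then (1:ℝ) else 0| ≤ 1 := by
    intro ω; by_cases h : An ω = a <;> simp [h]
  have hRbd : ∀ ω, |Rn ω| ≤ 1 := by
    intro ω
    rcases hR01 ω with ⟨h0, h1⟩
    rw [abs_le]; constructor <;> linarith
  have hgmeas : Measurable (fun ω => (if An ω = a then (1:ℝ) else 0) * Rn ω) :=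
    hImeas.mul hRn
  have hgbd : ∀ ω, |(if An ω = a then (1:ℝ) else 0) * Rn ω| ≤ 1 := by
    intro ω
    calc |(if An ω = a then (1:ℝ) else 0) * Rn ω|
        = |if An ω = a then (1:ℝ) else 0| * |Rn ω| := abs_mul _ _
      _ ≤ 1 * 1 := mul_le_mul (hIbd ω) (hRbd ω) (abs_nonneg _) zero_le_one
      _ = 1 := mul_one 1
  have hgint : Integrable (fun ω => (if An ω = a then (1:ℝ) else 0) * Rn ω) P :=
    integrable_of_bdd hgmeas.aestronglyMeasurable (Filter.Eventually.of_forall hgbd)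
  have hRint : Integrable Rn P :=
    integrable_of_bdd hRn.aestronglyMeasurable (Filter.Eventually.of_forall hRbd)
  -- Step: P[I * Rn | 𝒢] = rbar a * I
  have hg𝒢 : P[fun ω => (if An ω = a then (1:ℝ) else 0) * Rn ω
        | m ⊔ MeasurableSpace.comap An inferInstance]
      =ᵐ[P] fun ω => rbar a * (if An ω = a then (1:ℝ) else 0) := by
    have h1 : P[(fun ω => if An ω = a then (1:ℝ) else 0) * Rn
          | m ⊔ MeasurableSpace.comap An inferInstance]
        =ᵐ[P] (fun ω => if An ω = a then (1:ℝ) else 0)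
          * P[Rn | m ⊔ MeasurableSpace.comap An inferInstance] :=
      condExp_mul_of_stronglyMeasurable_left hI𝒢 hgint hRint
    refine h1.trans ?_
    filter_upwards [hrew] with ω hω
    show (if An ω = a then (1:ℝ) else 0)
        * (P[Rn | m ⊔ MeasurableSpace.comap An inferInstance]) ω = _
    rw [hω]
    by_cases h : An ω = a
    · simp [h]
    · simp [h]
  -- Step: P[I * Rn | m] = rbar a * q
  have hgm : P[fun ω => (if An ω = a then (1:ℝ) else 0) * Rn ω | m]
      =ᵐ[P] fun ω => rbar a * q ω := by
    have h0 : P[fun ω => (if An ω = a then (1:ℝ) else 0) * Rn ω | m]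
        =ᵐ[P] P[P[fun ω => (if An ω = a then (1:ℝ) else 0) * Rn ω
          | m ⊔ MeasurableSpace.comap An inferInstance] | m] :=
      (condExp_condExp_of_le hm𝒢 h𝒢).symm
    have h1 := condExp_congr_ae (m := m) (μ := P) hg𝒢
    have h2 : P[fun ω => rbar a * (if An ω = a then (1:ℝ) else 0) | m]
        =ᵐ[P] fun ω => rbar a * (P[fun ω => if An ω = a then (1:ℝ) else 0 | m]) ω := by
      exact condExp_smul (μ := P) (m := m) (rbar a)
        (fun ω => if An ω = a then (1:ℝ) else 0)
    have h3 : (fun ω => rbar a * (P[fun ω => if An ω = a then (1:ℝ) else 0 | m]) ω)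
        =ᵐ[P] fun ω => rbar a * q ω := by
      filter_upwards [hcond] with ω hω
      rw [hω]
    exact ((h0.trans h1).trans h2).trans h3
  -- pull out q⁻¹
  have hfm : StronglyMeasurable[m] (fun ω => (q ω)⁻¹) := (hq.inv).stronglyMeasurable
  have hfmeas : Measurable (fun ω => (q ω)⁻¹) := (hq.mono hm le_rfl).inv
  have hfbd : ∀ᵐ ω ∂P, |(q ω)⁻¹| ≤ ε⁻¹ := by
    filter_upwards [hεq] with ω hω
    have hpos : 0 < q ω := lt_of_lt_of_le hε0 hω
    rw [abs_of_pos (by positivity)]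
    exact inv_anti₀ hε0 hω
  have hfgint : Integrable ((fun ω => (q ω)⁻¹)
      * fun ω => (if An ω = a then (1:ℝ) else 0) * Rn ω) P := by
    apply integrable_of_bdd ((hfmeas.mul hgmeas).aestronglyMeasurable)
    filter_upwards [hfbd] with ω hω
    calc |((fun ω => (q ω)⁻¹) * fun ω => (if An ω = a then (1:ℝ) else 0) * Rn ω) ω|
        = |(q ω)⁻¹| * |(if An ω = a then (1:ℝ) else 0) * Rn ω| := abs_mul _ _
      _ ≤ ε⁻¹ * 1 := mul_le_mul hω (hgbd ω) (abs_nonneg _) (by positivity)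
      _ = ε⁻¹ := mul_one _
  have hpull := condExp_mul_of_stronglyMeasurable_left (μ := P) hfm hfgint hgint
  have hfg_eq : (fun ω => (if An ω = a then (1:ℝ) else 0) / q ω * Rn ω)
      = (fun ω => (q ω)⁻¹) * fun ω => (if An ω = a then (1:ℝ) else 0) * Rn ω := by
    funext ω
    show (if An ω = a then (1:ℝ) else 0) / q ω * Rn ω
      = (q ω)⁻¹ * ((if An ω = a then (1:ℝ) else 0) * Rn ω)
    rw [div_eq_mul_inv]
    ring
  rw [hfg_eq]
  refine hpull.trans ?_
  filter_upwards [hgm, hεq] with ω h1 h2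
  have hne : q ω ≠ 0 := (lt_of_lt_of_le hε0 h2).ne'
  show (q ω)⁻¹ * (P[fun ω => (if An ω = a then (1:ℝ) else 0) * Rn ω | m]) ω = rbar a
  rw [h1]
  rw [mul_comm (rbar a), inv_mul_cancel_left₀ hne]


/-- Donsker–Varadhan inequality (upper bound direction), finite case. -/
lemma dv_le {𝒜 : Type*} [Fintype 𝒜] {μ p : 𝒜 → ℝ} (hμ : IsPMF μ) (hp : IsPMF p)
    (habs : ∀ a, μ a = 0 → p a = 0) (f : 𝒜 → ℝ) :
    ∑ a, p a * f a - KL p μ ≤ Real.log (∑ a, μ a * Real.exp (f a)) := by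
  classical
  set s : Finset 𝒜 := Finset.univ.filter (fun a => p a ≠ 0) with hs
  have hμpos : ∀ a ∈ s, 0 < μ a := by
    intro a ha
    simp only [hs, Finset.mem_filter] at ha
    rcases (hμ.1 a).eq_or_lt with h | h
    · exact absurd (habs a h.symm) ha.2
    · exact h
  have hppos : ∀ a ∈ s, 0 < p a := by
    intro a ha
    simp only [hs, Finset.mem_filter] at ha
    exact (hp.1 a).lt_of_ne' ha.2
  have hsum1 : ∑ a ∈ s, p a = 1 := by
    rw [← hp.2]
    apply Finset.sum_filter_of_ne
    intro a _ h
    exact h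
  -- LHS = ∑ over s of p a * log (μ a * exp (f a) / p a)
  have hLHS : ∑ a, p a * f a - KL p μ
      = ∑ a ∈ s, p a * Real.log (μ a * Real.exp (f a) / p a) := by
    rw [KL, ← Finset.sum_sub_distrib]
    rw [← Finset.sum_filter_of_ne (s := Finset.univ)
      (f := fun a => p a * f a - p a * Real.log (p a / μ a)) (p := fun a => p a ≠ 0)
      (by intro a _ h
          by_contra hpa0
          apply h
          show p a * f a - p a * Real.log (p a / μ a) = 0
          rw [hpa0]; ring)]
    apply Finset.sum_congr rfl
    intro a ha
    have hμa := hμpos a ha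
    have hpa := hppos a ha
    have h1 : Real.log (μ a * Real.exp (f a) / p a)
        = Real.log (μ a) + f a - Real.log (p a) := by
      rw [Real.log_div (by positivity) hpa.ne', Real.log_mul hμa.ne' (Real.exp_pos _).ne',
        Real.log_exp]
    have h2 : Real.log (p a / μ a) = Real.log (p a) - Real.log (μ a) :=
      Real.log_div hpa.ne' hμa.ne'
    rw [h1, h2]
    ring
  rw [hLHS]
  -- Jensen for log
  have hjensen : ∑ a ∈ s, p a • Real.log (μ a * Real.exp (f a) / p a)
      ≤ Real.log (∑ a ∈ s, p a • (μ a * Real.exp (f a) / p a)) := by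
    apply ConcaveOn.le_map_sum strictConcaveOn_log_Ioi.concaveOn
    · intro a ha; exact (hppos a ha).le
    · exact hsum1
    · intro a ha
      have := hμpos a ha
      have := hppos a ha
      exact Set.mem_Ioi.2 (by positivity)
  simp only [smul_eq_mul] at hjensen
  refine hjensen.trans ?_
  apply Real.log_le_log
  · apply Finset.sum_pos
    · intro a ha
      have := hμpos a ha
      have := hppos a ha
      positivity
    · -- s nonempty
      rcases Finset.exists_ne_zero_of_sum_ne_zero (by rw [hp.2]; norm_num :
          ∑ a, p a ≠ 0) with ⟨a, _, ha⟩
      exact ⟨a, by simp [hs, ha]⟩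
  · have : ∀ a ∈ s, p a * (μ a * Real.exp (f a) / p a) = μ a * Real.exp (f a) := by
      intro a ha
      field_simp [(hppos a ha).ne']
    rw [Finset.sum_congr rfl this]
    apply Finset.sum_le_sum_of_subset_of_nonneg (Finset.filter_subset _ _)
    intro a _ _
    exact mul_nonneg (hμ.1 a) (Real.exp_pos _).le


/-- **Exponential supremum inequality (Donsker–Varadhan plus Hoeffding–Azuma step)**:
`E[exp(sup_π {λ (r̂^IS(π,H^t) − r̄(π)) − KL(π‖μ)} − λ²/(8 t ε²))] ≤ 1`. -/
theorem exp_sup_inequality_hoeffding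
    {Ω 𝒜 : Type*} [MeasurableSpace Ω] [Fintype 𝒜] [DecidableEq 𝒜]
    [MeasurableSpace 𝒜] [MeasurableSingletonClass 𝒜]
    (P : Measure Ω) [IsProbabilityMeasure P]
    -- the horizon
    (t : ℕ) (ht : 1 ≤ t)
    -- the action and reward processes
    (A : ℕ → Ω → 𝒜) (R : ℕ → Ω → ℝ)
    (hA : ∀ n, Measurable (A n)) (hR : ∀ n, Measurable (R n))
    (hR01 : ∀ n ω, R n ω ∈ Set.Icc (0 : ℝ) 1)
    -- the logging policies: `ℱ_{n-1}`-measurable pmfs on `𝒜`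
    (pol : ℕ → Ω → 𝒜 → ℝ)
    (hpolPMF : ∀ n ω, IsPMF (pol n ω))
    (hpolMeas : ∀ n a, Measurable[hist A R (n - 1)] (fun ω => pol n ω a))
    -- the conditional distribution of `A_n` given `ℱ_{n-1}` is `π_n`
    (hpolCond : ∀ n, 1 ≤ n → n ≤ t → ∀ a : 𝒜,
      (P[(fun ω => if A n ω = a then (1 : ℝ) else 0) | hist A R (n - 1)])
        =ᵐ[P] fun ω => pol n ω a)
    -- the mean-reward function: `E[R_n | ℱ_{n-1}, A_n] = r̄(A_n)`
    (rbar : 𝒜 → ℝ) (hrbar : ∀ a, rbar a ∈ Set.Icc (0 : ℝ) 1)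
    (hrew : ∀ n, 1 ≤ n → n ≤ t →
      (P[R n | hist A R (n - 1) ⊔ MeasurableSpace.comap (A n) inferInstance])
        =ᵐ[P] fun ω => rbar (A n ω))
    -- a uniform lower bound on the logging policies
    (ε : ℝ) (hε0 : 0 < ε) (hε1 : ε ≤ 1)
    (hεpol : ∀ n, 1 ≤ n → n ≤ t → ∀ a : 𝒜, ∀ᵐ ω ∂P, ε ≤ pol n ω a)
    -- the prior policy
    (μ : 𝒜 → ℝ) (hμ : IsPMF μ)
    (l : ℝ) (hl : 0 < l) :
    ∫ ω, Real.exp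
        ((⨆ p : {p : 𝒜 → ℝ // IsPMF p ∧ ∀ a, μ a = 0 → p a = 0},
            (l * (rISPol A R pol t p.1 ω - rPol rbar p.1) - KL p.1 μ))
          - l ^ 2 / (8 * t * ε ^ 2)) ∂P ≤ 1 := by
  classical
  have htR : (0:ℝ) < t := by exact_mod_cast Nat.lt_of_lt_of_le Nat.zero_lt_one ht
  have htne : (t:ℝ) ≠ 0 := ne_of_gt htR
  have hεne : ε ≠ 0 := ne_of_gt hε0
  have hinvpos : (0:ℝ) < ε⁻¹ := inv_pos.mpr hε0
  have hinv1 : (1:ℝ) ≤ ε⁻¹ := by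
    have h := mul_inv_cancel₀ hεne
    nlinarith [mul_nonneg hinvpos.le (sub_nonneg.mpr hε1)]
  set s : ℝ := l / t with hs_def
  set c : ℝ := l ^ 2 / (8 * t * ε ^ 2) with hc_def
  -- basic measurability of the increments
  have hIout : ∀ a₀ : 𝒜, Measurable (fun x : 𝒜 => if x = a₀ then (1:ℝ) else 0) :=
    fun a₀ => Measurable.ite (measurableSet_singleton a₀) measurable_const measurable_const
  have hpolM : ∀ (n : ℕ) (a₀ : 𝒜), Measurable (fun ω => pol n ω a₀) :=
    fun n a₀ => (hpolMeas n a₀).mono (hist_le hA hR (n-1)) le_rfl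
  have hZmeas : ∀ (a₀ : 𝒜) (n : ℕ), Measurable
      (fun ω => (if A n ω = a₀ then (1:ℝ) else 0) / pol n ω a₀ * R n ω - rbar a₀) :=
    fun a₀ n => ((((hIout a₀).comp (hA n)).div (hpolM n a₀)).mul (hR n)).sub measurable_const
  -- a.e. interval bound on the increments
  have hZbd : ∀ (a₀ : 𝒜) (n : ℕ), 1 ≤ n → n ≤ t → ∀ᵐ ω ∂P,
      ((if A n ω = a₀ then (1:ℝ) else 0) / pol n ω a₀ * R n ω - rbar a₀)
        ∈ Set.Icc (-rbar a₀) (ε⁻¹ - rbar a₀) := by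
    intro a₀ n h1 h2
    filter_upwards [hεpol n h1 h2 a₀] with ω hω
    have hpp : 0 < pol n ω a₀ := lt_of_lt_of_le hε0 hω
    rcases hR01 n ω with ⟨hr0, hr1⟩
    have h0 : 0 ≤ (if A n ω = a₀ then (1:ℝ) else 0) / pol n ω a₀ * R n ω := by
      apply mul_nonneg (div_nonneg _ hpp.le) hr0
      split <;> norm_num
    have h1' : (if A n ω = a₀ then (1:ℝ) else 0) / pol n ω a₀ * R n ω ≤ ε⁻¹ := by
      by_cases h : A n ω = a₀
      · rw [h, if_pos rfl]
        have : (1:ℝ) / pol n ω a₀ * R n ω = R n ω / pol n ω a₀ := by ring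
        rw [this]
        have := div_le_div₀ zero_le_one hr1 hε0 hω
        rwa [one_div] at this
      · rw [if_neg h]
        simp only [zero_div, zero_mul]
        exact hinvpos.le
    exact ⟨by linarith, by linarith⟩
  have habsZ : ∀ (a₀ : 𝒜) (n : ℕ), 1 ≤ n → n ≤ t → ∀ᵐ ω ∂P,
      |(if A n ω = a₀ then (1:ℝ) else 0) / pol n ω a₀ * R n ω - rbar a₀| ≤ ε⁻¹ := by
    intro a₀ n h1 h2
    filter_upwards [hZbd a₀ n h1 h2] with ω hω
    rcases hrbar a₀ with ⟨hb0, hb1⟩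
    rw [abs_le]
    exact ⟨by linarith [hω.1], by linarith [hω.2]⟩
  -- the linearization identity
  have hlin : ∀ (a₀ : 𝒜) (ω : Ω), l * (rIS A R pol t a₀ ω - rbar a₀)
      = s * ∑ n ∈ Finset.Icc 1 t,
        ((if A n ω = a₀ then (1:ℝ) else 0) / pol n ω a₀ * R n ω - rbar a₀) := by
    intro a₀ ω
    have hterm_eq : ∀ n, (if A n ω = a₀ then (1:ℝ) else 0) / pol n ω (A n ω) * R n ω
        = (if A n ω = a₀ then (1:ℝ) else 0) / pol n ω a₀ * R n ω := by
      intro n; by_cases h : A n ω = a₀ <;> simp [h]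
    have hsum : ∑ n ∈ Finset.Icc 1 t,
        ((if A n ω = a₀ then (1:ℝ) else 0) / pol n ω a₀ * R n ω - rbar a₀)
        = (∑ n ∈ Finset.Icc 1 t, (if A n ω = a₀ then (1:ℝ) else 0) / pol n ω a₀ * R n ω)
          - t * rbar a₀ := by
      rw [Finset.sum_sub_distrib, Finset.sum_const, Nat.card_Icc]
      simp [nsmul_eq_mul]
    rw [rIS, Finset.sum_congr rfl (fun n _ => hterm_eq n), hsum, hs_def]
    field_simp
  -- integrability of the per-action exponential
  have hexpmeas : ∀ a₀ : 𝒜,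
      Measurable (fun ω => Real.exp (l * (rIS A R pol t a₀ ω - rbar a₀) - c)) := by
    intro a₀
    have heq : (fun ω => l * (rIS A R pol t a₀ ω - rbar a₀) - c)
        = fun ω => s * (∑ n ∈ Finset.Icc 1 t,
            ((if A n ω = a₀ then (1:ℝ) else 0) / pol n ω a₀ * R n ω - rbar a₀)) - c :=
      funext fun ω => by rw [hlin a₀ ω]
    apply Measurable.comp Real.measurable_exp
    rw [heq]
    exact ((Finset.measurable_sum _ (fun n _ => hZmeas a₀ n)).const_mul s).sub
      measurable_const
  have hball : ∀ a₀ : 𝒜, ∀ᵐ ω ∂P, ∀ n ∈ Finset.Icc 1 t,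
      |(if A n ω = a₀ then (1:ℝ) else 0) / pol n ω a₀ * R n ω - rbar a₀| ≤ ε⁻¹ := by
    intro a₀
    rw [Filter.eventually_all_finset]
    intro n hn
    simp only [Finset.mem_Icc] at hn
    exact habsZ a₀ n hn.1 hn.2
  have hsumbd : ∀ a₀ : 𝒜, ∀ᵐ ω ∂P,
      |∑ n ∈ Finset.Icc 1 t,
        ((if A n ω = a₀ then (1:ℝ) else 0) / pol n ω a₀ * R n ω - rbar a₀)| ≤ t * ε⁻¹ := by
    intro a₀
    filter_upwards [hball a₀] with ω hω
    calc |∑ n ∈ Finset.Icc 1 t,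
          ((if A n ω = a₀ then (1:ℝ) else 0) / pol n ω a₀ * R n ω - rbar a₀)|
        ≤ ∑ n ∈ Finset.Icc 1 t,
          |(if A n ω = a₀ then (1:ℝ) else 0) / pol n ω a₀ * R n ω - rbar a₀| :=
          Finset.abs_sum_le_sum_abs _ _
      _ ≤ ∑ n ∈ Finset.Icc 1 t, ε⁻¹ := Finset.sum_le_sum hω
      _ = t * ε⁻¹ := by simp [Nat.card_Icc]
  have hint : ∀ a₀ : 𝒜,
      Integrable (fun ω => Real.exp (l * (rIS A R pol t a₀ ω - rbar a₀) - c)) P := by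
    intro a₀
    apply integrable_of_bdd (hexpmeas a₀).aestronglyMeasurable
      (C := Real.exp (|s| * (t * ε⁻¹) + |c|))
    filter_upwards [hsumbd a₀] with ω hω
    rw [abs_of_pos (Real.exp_pos _)]
    apply Real.exp_le_exp.2
    rw [hlin a₀ ω]
    have h1 : s * ∑ n ∈ Finset.Icc 1 t,
        ((if A n ω = a₀ then (1:ℝ) else 0) / pol n ω a₀ * R n ω - rbar a₀)
        ≤ |s| * (t * ε⁻¹) := by
      calc s * ∑ n ∈ Finset.Icc 1 t,
            ((if A n ω = a₀ then (1:ℝ) else 0) / pol n ω a₀ * R n ω - rbar a₀)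
          ≤ |s * ∑ n ∈ Finset.Icc 1 t,
            ((if A n ω = a₀ then (1:ℝ) else 0) / pol n ω a₀ * R n ω - rbar a₀)| :=
            le_abs_self _
        _ = |s| * |∑ n ∈ Finset.Icc 1 t,
            ((if A n ω = a₀ then (1:ℝ) else 0) / pol n ω a₀ * R n ω - rbar a₀)| :=
            abs_mul _ _
        _ ≤ |s| * (t * ε⁻¹) := mul_le_mul_of_nonneg_left hω (abs_nonneg s)
    linarith [neg_abs_le c]
  -- key: the per-action exponential moment bound
  have key : ∀ a₀ : 𝒜,
      ∫ ω, Real.exp (l * (rIS A R pol t a₀ ω - rbar a₀) - c) ∂P ≤ 1 := by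
    intro a₀
    -- adaptedness
    have hadap : ∀ n, 1 ≤ n → n ≤ t → StronglyMeasurable[hist A R n]
        (fun ω => (if A n ω = a₀ then (1:ℝ) else 0) / pol n ω a₀ * R n ω - rbar a₀) := by
      intro n h1 h2
      refine Measurable.stronglyMeasurable ?_
      exact ((((hIout a₀).comp (measurable_A_hist h1 (le_refl n))).div
        ((hpolMeas n a₀).mono (hist_mono (by omega : n - 1 ≤ n)) le_rfl)).mul
        (measurable_R_hist h1 (le_refl n))).sub measurable_const
    -- conditional mean zero
    have hmean : ∀ n, 1 ≤ n → n ≤ t →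
        P[fun ω => (if A n ω = a₀ then (1:ℝ) else 0) / pol n ω a₀ * R n ω - rbar a₀
          | hist A R (n-1)] =ᵐ[P] 0 := by
      intro n h1 h2
      have hincr := condexp_incr_eq_rbar P (hist_le hA hR (n-1)) (A n) (R n) (hA n) (hR n)
        (hR01 n) (fun ω => pol n ω a₀) (hpolMeas n a₀) a₀ (hpolCond n h1 h2 a₀) rbar
        (hrew n h1 h2) ε hε0 (hεpol n h1 h2 a₀)
      have hterm_int : Integrable
          (fun ω => (if A n ω = a₀ then (1:ℝ) else 0) / pol n ω a₀ * R n ω) P := by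
        have hm2 : Measurable
            (fun ω => (if A n ω = a₀ then (1:ℝ) else 0) / pol n ω a₀ * R n ω) :=
          (((hIout a₀).comp (hA n)).div (hpolM n a₀)).mul (hR n)
        apply integrable_of_bdd hm2.aestronglyMeasurable (C := ε⁻¹)
        filter_upwards [hεpol n h1 h2 a₀] with ω hω
        have hpp : 0 < pol n ω a₀ := lt_of_lt_of_le hε0 hω
        rcases hR01 n ω with ⟨hr0, hr1⟩
        have h0 : 0 ≤ (if A n ω = a₀ then (1:ℝ) else 0) / pol n ω a₀ * R n ω := by
          apply mul_nonneg (div_nonneg _ hpp.le) hr0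
          split <;> norm_num
        rw [abs_of_nonneg h0]
        by_cases h : A n ω = a₀
        · rw [h, if_pos rfl]
          have he : (1:ℝ) / pol n ω a₀ * R n ω = R n ω / pol n ω a₀ := by ring
          rw [he]
          have := div_le_div₀ zero_le_one hr1 hε0 hω
          rwa [one_div] at this
        · rw [if_neg h]
          simp only [zero_div, zero_mul]
          exact hinvpos.le
      have hsub := condExp_sub (m := hist A R (n-1)) (μ := P) hterm_int
        (integrable_const (rbar a₀))
      have heqZ : (fun ω => (if A n ω = a₀ then (1:ℝ) else 0) / pol n ω a₀ * R n ω - rbar a₀)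
          = (fun ω => (if A n ω = a₀ then (1:ℝ) else 0) / pol n ω a₀ * R n ω)
            - fun _ => rbar a₀ := rfl
      rw [heqZ]
      refine hsub.trans ?_
      filter_upwards [hincr] with ω hω
      simp only [Pi.sub_apply, Pi.zero_apply]
      rw [hω, condExp_const (hist_le hA hR (n-1)) (rbar a₀)]
      simp
    -- conditional Hoeffding bound
    have hHo : ∀ n, 1 ≤ n → n ≤ t →
        P[fun ω => Real.exp (s * ((if A n ω = a₀ then (1:ℝ) else 0) / pol n ω a₀ * R n ω
            - rbar a₀)) | hist A R (n-1)]
          ≤ᵐ[P] fun _ => Real.exp (s ^ 2 * (ε⁻¹) ^ 2 / 8) := by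
      intro n h1 h2
      rcases hrbar a₀ with ⟨hb0, hb1⟩
      have h := condexp_exp_le (hist_le hA hR (n-1)) (hZmeas a₀ n)
        (a := -rbar a₀) (b := ε⁻¹ - rbar a₀) (s := s)
        (by linarith) (by linarith) (by linarith)
        (hZbd a₀ n h1 h2) (hmean n h1 h2)
      have e : ε⁻¹ - rbar a₀ - -rbar a₀ = ε⁻¹ := by ring
      rw [e] at h
      exact h
    -- Azuma
    have hAz := azuma_mgf P (hist A R) (hist_le hA hR) hist_mono
      (fun n ω => (if A n ω = a₀ then (1:ℝ) else 0) / pol n ω a₀ * R n ω - rbar a₀)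
      (hZmeas a₀) t hadap ε⁻¹ hinvpos.le (habsZ a₀) s (Real.exp (s ^ 2 * (ε⁻¹) ^ 2 / 8))
      (Real.exp_pos _).le hHo
    have hKt : (Real.exp (s ^ 2 * (ε⁻¹) ^ 2 / 8)) ^ t = Real.exp c := by
      rw [← Real.exp_nat_mul, hc_def, hs_def]
      congr 1
      field_simp
    have hsplit : (fun ω => Real.exp (l * (rIS A R pol t a₀ ω - rbar a₀) - c))
        = fun ω => Real.exp (s * ∑ n ∈ Finset.Icc 1 t,
            ((if A n ω = a₀ then (1:ℝ) else 0) / pol n ω a₀ * R n ω - rbar a₀))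
          * Real.exp (-c) := by
      funext ω
      rw [hlin a₀ ω, sub_eq_add_neg, Real.exp_add]
    calc ∫ ω, Real.exp (l * (rIS A R pol t a₀ ω - rbar a₀) - c) ∂P
        = ∫ ω, Real.exp (s * ∑ n ∈ Finset.Icc 1 t,
            ((if A n ω = a₀ then (1:ℝ) else 0) / pol n ω a₀ * R n ω - rbar a₀))
          * Real.exp (-c) ∂P := by rw [hsplit]
      _ = (∫ ω, Real.exp (s * ∑ n ∈ Finset.Icc 1 t,
            ((if A n ω = a₀ then (1:ℝ) else 0) / pol n ω a₀ * R n ω - rbar a₀)) ∂P)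
          * Real.exp (-c) := integral_mul_const _ _
      _ ≤ Real.exp c * Real.exp (-c) :=
          mul_le_mul_of_nonneg_right (hAz.trans_eq hKt) (Real.exp_pos _).le
      _ = 1 := by rw [← Real.exp_add]; simp
  -- the Donsker–Varadhan step and conclusion
  haveI hne : Nonempty {p : 𝒜 → ℝ // IsPMF p ∧ ∀ a, μ a = 0 → p a = 0} :=
    ⟨⟨μ, hμ, fun _ h => h⟩⟩
  obtain ⟨a₁, -, ha₁⟩ := Finset.exists_ne_zero_of_sum_ne_zero
    (by rw [hμ.2]; norm_num : ∑ a, μ a ≠ 0)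
  have hSpos : ∀ ω : Ω, 0 < ∑ a, μ a * Real.exp (l * (rIS A R pol t a ω - rbar a)) :=
    fun ω => Finset.sum_pos' (fun a _ => mul_nonneg (hμ.1 a) (Real.exp_pos _).le)
      ⟨a₁, Finset.mem_univ _, mul_pos ((hμ.1 a₁).lt_of_ne' ha₁) (Real.exp_pos _)⟩
  have hptw : ∀ ω : Ω,
      Real.exp ((⨆ p : {p : 𝒜 → ℝ // IsPMF p ∧ ∀ a, μ a = 0 → p a = 0},
          (l * (rISPol A R pol t p.1 ω - rPol rbar p.1) - KL p.1 μ)) - c)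
        ≤ ∑ a, μ a * Real.exp (l * (rIS A R pol t a ω - rbar a) - c) := by
    intro ω
    have hsup_le : (⨆ p : {p : 𝒜 → ℝ // IsPMF p ∧ ∀ a, μ a = 0 → p a = 0},
        (l * (rISPol A R pol t p.1 ω - rPol rbar p.1) - KL p.1 μ))
        ≤ Real.log (∑ a, μ a * Real.exp (l * (rIS A R pol t a ω - rbar a))) := by
      apply ciSup_le
      intro p
      have hrw : l * (rISPol A R pol t p.1 ω - rPol rbar p.1)
          = ∑ a, p.1 a * (l * (rIS A R pol t a ω - rbar a)) := by
        rw [rISPol, rPol, ← Finset.sum_sub_distrib, Finset.mul_sum]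
        apply Finset.sum_congr rfl
        intro a _
        ring
      rw [hrw]
      exact dv_le hμ p.2.1 p.2.2 _
    calc Real.exp ((⨆ p : {p : 𝒜 → ℝ // IsPMF p ∧ ∀ a, μ a = 0 → p a = 0},
          (l * (rISPol A R pol t p.1 ω - rPol rbar p.1) - KL p.1 μ)) - c)
        ≤ Real.exp (Real.log (∑ a, μ a * Real.exp (l * (rIS A R pol t a ω - rbar a))) - c) :=
          Real.exp_le_exp.2 (sub_le_sub_right hsup_le c)
      _ = (∑ a, μ a * Real.exp (l * (rIS A R pol t a ω - rbar a))) / Real.exp c := by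
          rw [Real.exp_sub, Real.exp_log (hSpos ω)]
      _ = ∑ a, μ a * Real.exp (l * (rIS A R pol t a ω - rbar a) - c) := by
          rw [Finset.sum_div]
          apply Finset.sum_congr rfl
          intro a _
          rw [Real.exp_sub]
          ring
  have hMint : Integrable
      (fun ω => ∑ a, μ a * Real.exp (l * (rIS A R pol t a ω - rbar a) - c)) P :=
    integrable_finset_sum _ (fun a _ => (hint a).const_mul (μ a))
  calc ∫ ω, Real.exp ((⨆ p : {p : 𝒜 → ℝ // IsPMF p ∧ ∀ a, μ a = 0 → p a = 0},
          (l * (rISPol A R pol t p.1 ω - rPol rbar p.1) - KL p.1 μ)) - c) ∂P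
      ≤ ∫ ω, ∑ a, μ a * Real.exp (l * (rIS A R pol t a ω - rbar a) - c) ∂P :=
        integral_mono_of_nonneg
          (Filter.Eventually.of_forall fun ω => (Real.exp_pos _).le) hMint
          (Filter.Eventually.of_forall hptw)
    _ = ∑ a, μ a * ∫ ω, Real.exp (l * (rIS A R pol t a ω - rbar a) - c) ∂P := by
        rw [integral_finset_sum _ (fun a _ => (hint a).const_mul (μ a))]
        apply Finset.sum_congr rfl
        intro a _
        exact integral_const_mul _ _
    _ ≤ ∑ a, μ a * 1 :=
        Finset.sum_le_sum (fun a _ => mul_le_mul_of_nonneg_left (key a) (hμ.1 a))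
    _ = 1 := by simp [hμ.2]


end OfflineBandits
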